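/- Let Φ be a crystallographic root system with Hessenberg set 𝔥, let P be a flow-up class at w ∈ W in H_T*(𝔥), and let v = s_α w be a cover of w in Bruhat order. If v⁻¹α ∉ −𝔥 (the edge w → v is deleted in Γ_𝔥), then P(v) = 0. -/

import Mathlib

open scoped RealInnerProductSpace Pointwise

noncomputable section

/-- Euclidean `n`-space, the ambient space of the root system. -/
abbrev EV (n : ℕ) := EuclideanSpace ℝ (Fin n)

/-- The (orthogonal) reflection in the hyperplane orthogonal to `α`. -/
def sRefl {n : ℕ} (α : EV n) : EV n ≃ₗᵢ[ℝ] EV n :=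
  Submodule.reflection ((ℝ ∙ α)ᗮ)

/-- A finite crystallographic root system in `ℝⁿ`, together with a choice of
positive roots and a base of simple roots. -/
structure BasedRootSystem (n : ℕ) where
  /-- the set of roots -/
  Φ : Set (EV n)
  /-- the positive roots -/
  pos : Set (EV n)
  /-- the base of simple roots -/
  Δ : Set (EV n)
  finite : Φ.Finite
  nonzero : ∀ α ∈ Φ, α ≠ 0
  reduced : ∀ α ∈ Φ, ∀ c : ℝ, c • α ∈ Φ → c = 1 ∨ c = -1
  reflect_mem : ∀ α ∈ Φ, ∀ β ∈ Φ, sRefl α β ∈ Φ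
  cartan_int : ∀ α ∈ Φ, ∀ β ∈ Φ, ∃ m : ℤ, (m : ℝ) = 2 * ⟪α, β⟫ / ⟪α, α⟫
  pos_sub : pos ⊆ Φ
  pos_union : Φ = pos ∪ (-pos)
  pos_disj : pos ∩ (-pos) = ∅
  Δ_sub : Δ ⊆ pos
  Δ_indep : LinearIndependent ℝ ((↑) : Δ → EV n)
  Δ_span : Submodule.span ℝ Δ = ⊤
  pos_combo : ∀ α ∈ pos, α ∈ AddSubmonoid.closure Δ

namespace BasedRootSystem

variable {n : ℕ} (R : BasedRootSystem n)

/-- The root order: `α ≺ β` iff `β - α` is a nonempty sum of positive roots. -/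
def prec (a b : EV n) : Prop :=
  a ≠ b ∧ b - a ∈ AddSubmonoid.closure R.pos

/-- An ideal of the positive roots: upward closed for the root order. -/
def IsIdeal (I : Set (EV n)) : Prop :=
  I ⊆ R.pos ∧ ∀ β ∈ I, ∀ α ∈ R.pos, R.prec β α → α ∈ I

/-- A Hessenberg set: the complement in `Φ⁺` of an ideal. -/
def IsHess (h : Set (EV n)) : Prop :=
  h ⊆ R.pos ∧ R.IsIdeal (R.pos \ h)

/-- The Weyl group, generated by the reflections in the roots. -/
def Weyl : Subgroup (EV n ≃ₗᵢ[ℝ] EV n) :=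
  Subgroup.closure {g | ∃ α ∈ R.Φ, g = sRefl α}

/-- Application of a Weyl group element to a vector. -/
def ap (w : R.Weyl) (x : EV n) : EV n := (w : EV n ≃ₗᵢ[ℝ] EV n) x

/-- The inversion set `N_w = {α ∈ Φ⁺ : w⁻¹ α ∈ Φ⁻}`. -/
def N (w : R.Weyl) : Set (EV n) := {α | α ∈ R.pos ∧ R.ap w⁻¹ α ∈ -R.pos}

/-- The length of a Weyl group element, `ℓ(w) = |N_w|`. -/
def len (w : R.Weyl) : ℕ := (R.N w).ncard

/-- The `𝔥`-inversion set `N_w^𝔥 = {α ∈ Φ⁺ : w⁻¹ α ∈ -𝔥}`. -/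
def Nh (h : Set (EV n)) (w : R.Weyl) : Set (EV n) :=
  {α | α ∈ R.pos ∧ R.ap w⁻¹ α ∈ -h}

/-- `ℓ_𝔥(w) = |N_w^𝔥|`, the number of Hessenberg edges ending at `w`. -/
def lenh (h : Set (EV n)) (w : R.Weyl) : ℕ := (R.Nh h w).ncard

/-- `v` covers `w` in Bruhat order: `v = s_α w` with `ℓ(v) = ℓ(w) + 1`. -/
def Covers (v w : R.Weyl) : Prop :=
  ∃ α ∈ R.pos, (v : EV n ≃ₗᵢ[ℝ] EV n) = sRefl α * (w : EV n ≃ₗᵢ[ℝ] EV n) ∧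
    R.len v = R.len w + 1

/-- Bruhat order: the transitive closure of the relations `w < s_α w`
whenever the length increases. -/
def bruhatLt (w v : R.Weyl) : Prop :=
  Relation.TransGen (fun u u' : R.Weyl =>
    ∃ α ∈ R.pos, (u' : EV n ≃ₗᵢ[ℝ] EV n) = sRefl α * (u : EV n ≃ₗᵢ[ℝ] EV n) ∧
      R.len u < R.len u') w v

/-- The edge relation of the Hessenberg graph `Γ_𝔥`: `u → w` when `w = s_α u`
with `α ∈ Φ⁺` and `w⁻¹ α ∈ -𝔥`. -/
def Edge (h : Set (EV n)) (u w : R.Weyl) : Prop :=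
  ∃ α ∈ R.pos, (w : EV n ≃ₗᵢ[ℝ] EV n) = sRefl α * (u : EV n ≃ₗᵢ[ℝ] EV n) ∧
    R.ap w⁻¹ α ∈ -h

/-- The flow-up (reachability) order of the Hessenberg graph. -/
def flowLe (h : Set (EV n)) (x y : R.Weyl) : Prop :=
  Relation.ReflTransGen (R.Edge h) x y

/-- The strict flow-up order. -/
def flowLt (h : Set (EV n)) (x y : R.Weyl) : Prop :=
  Relation.TransGen (R.Edge h) x y

/-- The linear polynomial in `ℝ[Δ] = ℝ[x₁,…,xₙ]` corresponding to a vector. -/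
def lin (α : EV n) : MvPolynomial (Fin n) ℝ :=
  ∑ i, MvPolynomial.C (α i) * MvPolynomial.X i

/-- The action of an isometry `w` on the polynomial ring, induced by the
linear action on the ambient space: it sends `lin α` to `lin (w α)`. -/
def polyAct (w : EV n ≃ₗᵢ[ℝ] EV n) :
    MvPolynomial (Fin n) ℝ →ₐ[ℝ] MvPolynomial (Fin n) ℝ :=
  MvPolynomial.aeval fun i => lin (w (EuclideanSpace.single i 1))

/-- The dot action of the Weyl group on `Maps(W, ℝ[Δ])`:
`(w · P)(u) = w (P (w⁻¹ u))`. -/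
def dot (w : R.Weyl) (P : R.Weyl → MvPolynomial (Fin n) ℝ) :
    R.Weyl → MvPolynomial (Fin n) ℝ :=
  fun u => polyAct (w : EV n ≃ₗᵢ[ℝ] EV n) (P (w⁻¹ * u))

/-- Membership in the GKM ring `H_T^*(𝔥)`: the GKM conditions
`P(w) - P(s_α w) ∈ ⟨α⟩` along all edges of `Γ_𝔥`. -/
def GKM (h : Set (EV n)) (P : R.Weyl → MvPolynomial (Fin n) ℝ) : Prop :=
  ∀ u w : R.Weyl, ∀ α ∈ R.pos,
    (w : EV n ≃ₗᵢ[ℝ] EV n) = sRefl α * (u : EV n ≃ₗᵢ[ℝ] EV n) →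
    R.ap w⁻¹ α ∈ -h → P w - P u ∈ Ideal.span {lin α}

/-- The product `∏_{α ∈ S} α` (over `S ∩ Φ`) as an element of `ℝ[Δ]`. -/
def prodRoots (S : Set (EV n)) : MvPolynomial (Fin n) ℝ :=
  ∏ α ∈ (R.finite.inter_of_right S).toFinset, lin α

/-- A flow-up class at `x`: homogeneous of degree `ℓ_𝔥(x)`, with
`P(x) = ∏_{α ∈ N_x^𝔥} α`, supported on the flow-up of `x`, and satisfying the
GKM conditions. -/
def IsFlowUp (h : Set (EV n)) (x : R.Weyl)
    (P : R.Weyl → MvPolynomial (Fin n) ℝ) : Prop :=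
  R.GKM h P ∧ (∀ y, (P y).IsHomogeneous (R.lenh h x)) ∧
    P x = R.prodRoots (R.Nh h x) ∧ ∀ y, P y ≠ 0 → R.flowLe h x y

/-- Irreducibility: the roots admit no splitting into two nonempty mutually
orthogonal parts. -/
def IsIrreducible : Prop :=
  ∀ Ψ Ψ' : Set (EV n), Ψ ∪ Ψ' = R.Φ → (∀ a ∈ Ψ, ∀ b ∈ Ψ', ⟪a, b⟫ = 0) →
    Ψ = ∅ ∨ Ψ' = ∅

/-- `γ` is the highest root: `α ⪯ γ` for every root `α`. -/
def IsHighest (γ : EV n) : Prop :=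
  γ ∈ R.pos ∧ ∀ α ∈ R.Φ, α = γ ∨ R.prec α γ

end BasedRootSystem

namespace BasedRootSystem

variable {n : ℕ} (R : BasedRootSystem n)

lemma sRefl_self (β : EV n) : sRefl β β = -β :=
  Submodule.reflection_orthogonalComplement_singleton_eq_neg β

lemma sRefl_sRefl (β x : EV n) : sRefl β (sRefl β x) = x :=
  Submodule.reflection_reflection _ x

lemma sRefl_inv (β : EV n) : (sRefl β)⁻¹ = sRefl β := by
  rw [LinearIsometryEquiv.inv_def, sRefl, Submodule.reflection_symm]

lemma sub_sRefl_mem (β x : EV n) : x - sRefl β x ∈ ℝ ∙ β := by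
  have h2 : x - (((ℝ ∙ β)ᗮ).starProjection x : EV n) ∈ ((ℝ ∙ β)ᗮ)ᗮ :=
    Submodule.sub_starProjection_mem_orthogonal x
  rw [Submodule.orthogonal_orthogonal] at h2
  have h1 : x - sRefl β x
      = (2 : ℝ) • (x - (((ℝ ∙ β)ᗮ).starProjection x : EV n)) := by
    rw [sRefl, Submodule.reflection_apply]
    rw [two_smul, two_smul]
    abel
  rw [h1]
  exact Submodule.smul_mem _ _ h2

lemma exists_pos_functional : ∃ f : EV n →ₗ[ℝ] ℝ, ∀ α ∈ R.pos, 0 < f α := by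
  have hsp : ⊤ ≤ Submodule.span ℝ (Set.range ((↑) : R.Δ → EV n)) := by
    rw [Subtype.range_coe, R.Δ_span]
  let b : Module.Basis R.Δ ℝ (EV n) := Module.Basis.mk R.Δ_indep hsp
  refine ⟨b.sumCoords, ?_⟩
  have hΔ : ∀ δ ∈ R.Δ, b.sumCoords δ = 1 := by
    intro δ hδ
    have := b.sumCoords_self_apply (i := ⟨δ, hδ⟩)
    rwa [Module.Basis.mk_apply] at this
  have key : ∀ x ∈ AddSubmonoid.closure R.Δ, x = 0 ∨ 1 ≤ b.sumCoords x := by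
    intro x hx
    induction hx using AddSubmonoid.closure_induction with
    | mem y hy => exact Or.inr (le_of_eq (hΔ y hy).symm)
    | zero => exact Or.inl rfl
    | add x y hx hy ihx ihy =>
        rcases ihx with rfl | ihx
        · simpa using ihy
        rcases ihy with rfl | ihy
        · simpa using Or.inr ihx
        · right
          rw [map_add]
          linarith
  intro α hα
  rcases key α (R.pos_combo α hα) with h0 | h1
  · exact absurd h0 (R.nonzero α (R.pos_sub hα))
  · linarith

lemma weyl_mem_aux {g : EV n ≃ₗᵢ[ℝ] EV n} (hg : g ∈ R.Weyl) :
    ∀ γ ∈ R.Φ, g γ ∈ R.Φ := by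
  induction hg using Subgroup.closure_induction with
  | mem x hx =>
      obtain ⟨a, ha, rfl⟩ := hx
      exact R.reflect_mem a ha
  | one => intro γ hγ; simpa using hγ
  | mul x y hx hy ihx ihy =>
      intro γ hγ
      have : (x * y) γ = x (y γ) := rfl
      rw [this]
      exact ihx _ (ihy _ hγ)
  | inv x hx ihx =>
      intro γ hγ
      have hm : Set.MapsTo x R.Φ R.Φ := fun z hz => ihx z hz
      have hbij : Set.BijOn x R.Φ R.Φ :=
        (R.finite.injOn_iff_bijOn_of_mapsTo hm).mp (x.injective.injOn)
      obtain ⟨y, hy, hxy⟩ := hbij.surjOn hγ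
      have : x⁻¹ γ = y := by
        rw [← hxy]
        exact x.symm_apply_apply y
      rw [this]
      exact hy

lemma ap_mem (w : R.Weyl) {γ : EV n} (hγ : γ ∈ R.Φ) : R.ap w γ ∈ R.Φ :=
  R.weyl_mem_aux w.2 γ hγ

lemma not_pos_and_neg {x : EV n} (h1 : x ∈ R.pos) (h2 : x ∈ -R.pos) : False := by
  have : x ∈ R.pos ∩ (-R.pos) := ⟨h1, h2⟩
  rw [R.pos_disj] at this
  exact this

lemma mem_pos_of_mem_Φ {x : EV n} (hx : x ∈ R.Φ) (hn : x ∉ -R.pos) : x ∈ R.pos := by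
  rw [R.pos_union] at hx
  exact hx.resolve_right hn

lemma mem_pos_of_mem_Φ' {x : EV n} (hx : x ∈ R.Φ) (hn : x ∉ R.pos) : x ∈ -R.pos := by
  rw [R.pos_union] at hx
  exact hx.resolve_left hn

lemma len_add_one_le_of_edge {h : Set (EV n)} (hh : R.IsHess h) {u u' : R.Weyl}
    (e : R.Edge h u u') : R.len u + 1 ≤ R.len u' := by
  classical
  obtain ⟨β, hβ, hu', hmem⟩ := e
  obtain ⟨f, hf⟩ := R.exists_pos_functional
  have hβΦ : β ∈ R.Φ := R.pos_sub hβ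
  have hfneg : ∀ x ∈ -R.pos, f x < 0 := by
    intro x hx
    rw [Set.mem_neg] at hx
    have := hf _ hx
    rw [map_neg] at this
    linarith
  -- basic computation for the inverse
  have hap' : ∀ x, R.ap u'⁻¹ x = R.ap u⁻¹ (sRefl β x) := by
    intro x
    show ((u'⁻¹ : R.Weyl) : EV n ≃ₗᵢ[ℝ] EV n) x = ((u⁻¹ : R.Weyl) : EV n ≃ₗᵢ[ℝ] EV n) (sRefl β x)
    have hco : ((u'⁻¹ : R.Weyl) : EV n ≃ₗᵢ[ℝ] EV n)
        = ((u : R.Weyl) : EV n ≃ₗᵢ[ℝ] EV n)⁻¹ * sRefl β := by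
      have : ((u'⁻¹ : R.Weyl) : EV n ≃ₗᵢ[ℝ] EV n)
          = ((u' : R.Weyl) : EV n ≃ₗᵢ[ℝ] EV n)⁻¹ := rfl
      rw [this, hu', mul_inv_rev, sRefl_inv]
    rw [hco]
    rfl
  have hβu : R.ap u⁻¹ β ∈ R.pos := by
    have h1 : R.ap u'⁻¹ β ∈ -h := hmem
    rw [hap', sRefl_self] at h1
    have h2 : R.ap u⁻¹ (-β) = -(R.ap u⁻¹ β) := by
      exact map_neg _ β
    rw [h2, Set.mem_neg, neg_neg] at h1
    exact hh.1 h1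
  -- key case-2 claim
  have key2 : ∀ γ, γ ∈ R.N u → sRefl β γ ∉ R.pos → R.ap u⁻¹ (sRefl β γ) ∈ -R.pos := by
    intro γ hγ hsγ
    obtain ⟨hγpos, hγneg⟩ := hγ
    have hsγΦ : sRefl β γ ∈ R.Φ := R.reflect_mem β hβΦ γ (R.pos_sub hγpos)
    have hsγn : sRefl β γ ∈ -R.pos := R.mem_pos_of_mem_Φ' hsγΦ hsγ
    set γ' := -(sRefl β γ) with hγ'def
    have hγ'pos : γ' ∈ R.pos := by rwa [Set.mem_neg] at hsγn
    obtain ⟨c, hc⟩ := Submodule.mem_span_singleton.mp (sub_sRefl_mem β γ)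
    -- c • β = γ - sRefl β γ = γ + γ'
    have hcβ : c • β = γ + γ' := by rw [hc, hγ'def]; abel
    have hcpos : 0 < c := by
      have h1 : f (c • β) = c * f β := by rw [map_smul]; rfl
      have h2 : f (γ + γ') = f γ + f γ' := map_add f γ γ'
      have h3 : c * f β = f γ + f γ' := by rw [← h1, ← h2, hcβ]
      have hfβ := hf β hβ
      have hfγ := hf γ hγpos
      have hfγ' := hf γ' hγ'pos
      nlinarith
    have hγ'eq : γ' = c • β - γ := by rw [hcβ]; abel
    have hapγ' : R.ap u⁻¹ γ' = c • R.ap u⁻¹ β - R.ap u⁻¹ γ := by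
      rw [hγ'eq]
      simp only [ap]
      rw [map_sub, map_smul]
    have hfapγ' : 0 < f (R.ap u⁻¹ γ') := by
      rw [hapγ', map_sub, map_smul, smul_eq_mul]
      have h4 := hf _ hβu
      have h5 := hfneg _ hγneg
      nlinarith
    have hapγ'Φ : R.ap u⁻¹ γ' ∈ R.Φ := R.ap_mem u⁻¹ (R.pos_sub hγ'pos)
    have hapγ'pos : R.ap u⁻¹ γ' ∈ R.pos := by
      refine R.mem_pos_of_mem_Φ hapγ'Φ ?_
      intro hcon
      exact absurd hfapγ' (not_lt.mpr (le_of_lt (hfneg _ hcon)))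
    have : R.ap u⁻¹ (sRefl β γ) = -(R.ap u⁻¹ γ') := by
      simp only [hγ'def, ap, map_neg, neg_neg]
    rw [this, Set.mem_neg, neg_neg]
    exact hapγ'pos
  set φ : EV n → EV n := fun γ => if sRefl β γ ∈ R.pos then sRefl β γ else γ with hφ
  have hmaps : ∀ γ ∈ R.N u, φ γ ∈ R.N u' := by
    intro γ hγ
    by_cases hcase : sRefl β γ ∈ R.pos
    · have hφγ : φ γ = sRefl β γ := if_pos hcase
      rw [hφγ]
      refine ⟨hcase, ?_⟩
      rw [hap', sRefl_sRefl]
      exact hγ.2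
    · have hφγ : φ γ = γ := if_neg hcase
      rw [hφγ]
      refine ⟨hγ.1, ?_⟩
      rw [hap']
      exact key2 γ hγ hcase
  have hβN : β ∈ R.N u' := by
    refine ⟨hβ, ?_⟩
    have h1 : R.ap u'⁻¹ β ∈ -h := hmem
    rw [Set.mem_neg] at h1 ⊢
    exact hh.1 h1
  have hβnotim : β ∉ φ '' (R.N u) := by
    rintro ⟨γ, hγ, hφγ⟩
    by_cases hcase : sRefl β γ ∈ R.pos
    · rw [hφ] at hφγ
      simp only [if_pos hcase] at hφγ
      have : γ = sRefl β β := by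
        have h7 := congrArg (sRefl β) hφγ
        rw [sRefl_sRefl] at h7
        exact h7
      rw [sRefl_self] at this
      refine R.not_pos_and_neg hγ.1 ?_
      rw [this, Set.mem_neg, neg_neg]
      exact hβ
    · rw [hφ] at hφγ
      simp only [if_neg hcase] at hφγ
      subst hφγ
      exact R.not_pos_and_neg hβu hγ.2
  have hinj : Set.InjOn φ (R.N u) := by
    intro γ₁ hγ₁ γ₂ hγ₂ heq
    rw [hφ] at heq
    by_cases h1 : sRefl β γ₁ ∈ R.pos <;> by_cases h2 : sRefl β γ₂ ∈ R.pos
    · simp only [if_pos h1, if_pos h2] at heq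
      exact (sRefl β).injective heq
    · simp only [if_pos h1, if_neg h2] at heq
      exfalso
      apply h2
      rw [← heq, sRefl_sRefl]
      exact hγ₁.1
    · simp only [if_neg h1, if_pos h2] at heq
      exfalso
      apply h1
      rw [heq, sRefl_sRefl]
      exact hγ₂.1
    · simpa only [if_neg h1, if_neg h2] using heq
  have hNfin : ∀ x : R.Weyl, (R.N x).Finite := fun x =>
    R.finite.subset (fun γ hγ => R.pos_sub hγ.1)
  have hsub : insert β (φ '' (R.N u)) ⊆ R.N u' := by
    rintro x (rfl | ⟨γ, hγ, rfl⟩)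
    · exact hβN
    · exact hmaps γ hγ
  calc R.len u + 1 = (φ '' (R.N u)).ncard + 1 := by
        rw [Set.ncard_image_of_injOn hinj]; rfl
    _ = (insert β (φ '' (R.N u))).ncard :=
        (Set.ncard_insert_of_notMem hβnotim ((hNfin u).image _)).symm
    _ ≤ (R.N u').ncard := Set.ncard_le_ncard hsub (hNfin u')
    _ = R.len u' := rfl

lemma len_add_one_le_of_flowLt {h : Set (EV n)} (hh : R.IsHess h) {x y : R.Weyl}
    (hxy : R.flowLt h x y) : R.len x + 1 ≤ R.len y := by
  induction hxy with
  | single e => exact R.len_add_one_le_of_edge hh e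
  | tail _ e ih =>
      have := R.len_add_one_le_of_edge hh e
      omega

end BasedRootSystem

open BasedRootSystem in
/-- If `P` is a flow-up class at `w` and `v = s_α w` is a cover of `w` whose
edge `w → v` is deleted in `Γ_𝔥` (i.e. `v⁻¹α ∉ -𝔥`), then `P(v) = 0`. -/
theorem flowup_deleted_edge_zero {n : ℕ} (R : BasedRootSystem n)
    (h : Set (EV n)) (hh : R.IsHess h) (w v : R.Weyl)
    (P : R.Weyl → MvPolynomial (Fin n) ℝ) (hP : R.IsFlowUp h w P)
    (α : EV n) (hα : α ∈ R.pos)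
    (hv : (v : EV n ≃ₗᵢ[ℝ] EV n) = sRefl α * (w : EV n ≃ₗᵢ[ℝ] EV n))
    (hlen : R.len v = R.len w + 1) (hdel : R.ap v⁻¹ α ∉ -h) :
    P v = 0 := by
  by_contra hPv
  have hle : R.flowLe h w v := hP.2.2.2 v hPv
  have hne : w ≠ v := by
    intro he
    rw [he] at hlen
    omega
  rcases Relation.ReflTransGen.cases_head hle with he | ⟨c, ec, hcv⟩
  · exact hne he
  by_cases hc : c = v
  · subst hc
    obtain ⟨β, hβ, hveq, hmemv⟩ := ec
    have hrefl : sRefl β = sRefl α := mul_right_cancel (hveq.symm.trans hv)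
    have hneg : sRefl α β = -β := by rw [← hrefl, sRefl_self]
    have h2β : β + β ∈ (ℝ ∙ α : Submodule ℝ (EV n)) := by
      have := sub_sRefl_mem α β
      rw [hneg, sub_neg_eq_add] at this
      exact this
    have hβspan : β ∈ (ℝ ∙ α : Submodule ℝ (EV n)) := by
      have hsm := Submodule.smul_mem (ℝ ∙ α) ((1 : ℝ)/2) h2β
      have : ((1 : ℝ)/2) • (β + β) = β := by
        rw [smul_add]
        rw [← add_smul]
        norm_num
      rwa [this] at hsm
    obtain ⟨c', hc'⟩ := Submodule.mem_span_singleton.mp hβspan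
    have hβΦ : c' • α ∈ R.Φ := by rw [hc']; exact R.pos_sub hβ
    rcases R.reduced α (R.pos_sub hα) c' hβΦ with h1 | h1
    · rw [h1, one_smul] at hc'
      rw [← hc'] at hmemv
      exact hdel hmemv
    · rw [h1] at hc'
      refine R.not_pos_and_neg hβ ?_
      rw [Set.mem_neg, ← hc']
      simpa using hα
  · have htr : R.flowLt h c v := by
      rcases Relation.reflTransGen_iff_eq_or_transGen.mp hcv with he | ht
      · exact absurd he.symm hc
      · exact ht
    have h1 := R.len_add_one_le_of_edge hh ec
    have h2 := R.len_add_one_le_of_flowLt hh htr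
    omega
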